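/- Let F be a field with char F ≠ 2 and char F ≠ 3, let α₁,α₄,β₂ ∈ F, and let A = A₃(α₁,α₄,β₂) = [[α₁, 0, 0, α₄],[0, β₂, 1-α₁, 0]]. Then: (i) if α₄ ≠ 0, the invertible matrices g with gA = A(g⊗g) are exactly [[1,0],[0,±1]], and the only matrix D with DA = A(D⊗I₂ + I₂⊗D) is 0; (ii) if α₄ = 0 and β₂ ≠ 2α₁-1, the automorphism matrices are exactly [[1,0],[0,d]] with d ∈ F, d ≠ 0, and the derivation matrices are exactly [[0,0],[0,d]] with d ∈ F; (iii) if α₄ = 0 and β₂ = 2α₁-1, the automorphism matrices are exactly [[1,0],[c,d]] with c,d ∈ F, d ≠ 0, and the derivation matrices are exactly [[0,0],[c,d]] with c,d ∈ F. -/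
import Mathlib


open Matrix Kronecker

/-- The matrix of structure constants (MSC) of a 2-dimensional algebra, as a
`2 × (2 × 2)` matrix: the column indexed by `(j,k)` corresponds to the product
`e_j · e_k`, so the columns in order `(0,0), (0,1), (1,0), (1,1)` carry the
entries `α₁ α₂ α₃ α₄` (first row) and `β₁ β₂ β₃ β₄` (second row). -/
def MSC {F : Type*} [Field F] (a1 a2 a3 a4 b1 b2 b3 b4 : F) :
    Matrix (Fin 2) (Fin 2 × Fin 2) F :=
  Matrix.of fun i j => !![a1, a2, a3, a4; b1, b2, b3, b4] i (finProdFinEquiv j)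

/-- `g` is an automorphism matrix of the algebra with MSC `A`:
`g` is invertible and `g • A = A • (g ⊗ g)`. -/
def IsAutoMat {F : Type*} [Field F] (A : Matrix (Fin 2) (Fin 2 × Fin 2) F)
    (g : Matrix (Fin 2) (Fin 2) F) : Prop :=
  IsUnit g ∧ g * A = A * (g ⊗ₖ g)

/-- `D` is a derivation matrix of the algebra with MSC `A`:
`D • A = A • (D ⊗ I + I ⊗ D)`. -/
def IsDerMat {F : Type*} [Field F] (A : Matrix (Fin 2) (Fin 2 × Fin 2) F)
    (D : Matrix (Fin 2) (Fin 2) F) : Prop :=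
  D * A = A * (D ⊗ₖ (1 : Matrix (Fin 2) (Fin 2) F) + (1 : Matrix (Fin 2) (Fin 2) F) ⊗ₖ D)

section Aux

variable {F : Type*} [Field F]

lemma aut_of (a1 a4 b2 c d : F) (hd : d ≠ 0) (h1 : a4 * c = 0)
    (h2 : a4 = a4 * d ^ 2) (h3 : (2 * a1 - 1 - b2) * c = 0) :
    IsAutoMat (MSC a1 0 0 a4 0 b2 (1 - a1) 0) !![1, 0; c, d] := by
  constructor
  · rw [Matrix.isUnit_iff_isUnit_det, Matrix.det_fin_two_of]
    simpa using hd
  · rcases mul_eq_zero.mp h1 with h0 | h0 <;> subst h0 <;>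
      · ext i jk
        obtain ⟨j, k⟩ := jk
        fin_cases i <;> fin_cases j <;> fin_cases k <;>
          simp [Matrix.mul_apply, Fintype.sum_prod_type, Fin.sum_univ_two, MSC,
            finProdFinEquiv] <;>
          first
            | ring1
            | linear_combination h2
            | linear_combination -h2
            | linear_combination h3
            | linear_combination -h3

lemma aut_char (a1 a4 b2 : F) (g : Matrix (Fin 2) (Fin 2) F) :
    IsAutoMat (MSC a1 0 0 a4 0 b2 (1 - a1) 0) g ↔
      g 0 0 = 1 ∧ g 0 1 = 0 ∧ g 1 1 ≠ 0 ∧ a4 * g 1 0 = 0 ∧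
        a4 = a4 * (g 1 1) ^ 2 ∧ (2 * a1 - 1 - b2) * g 1 0 = 0 := by
  constructor
  · rintro ⟨hu, h⟩
    have hdet : g 0 0 * g 1 1 - g 0 1 * g 1 0 ≠ 0 := by
      have := ((Matrix.isUnit_iff_isUnit_det g).mp hu).ne_zero
      rwa [Matrix.det_fin_two] at this
    have E1 := congrFun (congrFun h 0) ((0 : Fin 2), (0 : Fin 2))
    have E2 := congrFun (congrFun h 0) ((0 : Fin 2), (1 : Fin 2))
    have E3 := congrFun (congrFun h 0) ((1 : Fin 2), (0 : Fin 2))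
    have E4 := congrFun (congrFun h 0) ((1 : Fin 2), (1 : Fin 2))
    have E5 := congrFun (congrFun h 1) ((0 : Fin 2), (0 : Fin 2))
    have E6 := congrFun (congrFun h 1) ((0 : Fin 2), (1 : Fin 2))
    have E7 := congrFun (congrFun h 1) ((1 : Fin 2), (0 : Fin 2))
    have E8 := congrFun (congrFun h 1) ((1 : Fin 2), (1 : Fin 2))
    simp only [Matrix.mul_apply, Fintype.sum_prod_type, Fin.sum_univ_two, MSC,
      Matrix.kroneckerMap_apply, Matrix.of_apply] at E1 E2 E3 E4 E5 E6 E7 E8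
    norm_num [finProdFinEquiv] at E1 E2 E3 E4 E5 E6 E7 E8
    have key1 : (g 0 0 * g 1 1 - g 0 1 * g 1 0) * (g 0 0 - 1) = 0 := by
      linear_combination -(g 1 1 * E1) + g 1 0 * E3 + g 0 1 * E5 - g 0 0 * E7
    have key2 : (g 0 0 * g 1 1 - g 0 1 * g 1 0) * g 0 1 = 0 := by
      linear_combination -(g 1 1 * E2) + g 1 0 * E4 + g 0 1 * E6 - g 0 0 * E8
    have ha : g 0 0 = 1 := sub_eq_zero.mp ((mul_eq_zero.mp key1).resolve_left hdet)
    have hb : g 0 1 = 0 := (mul_eq_zero.mp key2).resolve_left hdet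
    have hd : g 1 1 ≠ 0 := by
      intro hz
      apply hdet
      rw [ha, hb, hz]; ring
    refine ⟨ha, hb, hd, ?_, ?_, ?_⟩
    · linear_combination E8 + (b2 * g 1 1 + (1 - a1) * g 1 1) * hb
    · linear_combination E4 - a4 * ha + a1 * g 0 1 * hb
    · linear_combination E5 + (b2 + 1 - a1) * g 1 0 * ha
  · rintro ⟨ha, hb, hd, h1, h2, h3⟩
    have := aut_of a1 a4 b2 (g 1 0) (g 1 1) hd h1 h2 h3
    rwa [Matrix.eta_fin_two g, ha, hb]

lemma der_of (a1 a4 b2 c d : F) (h1 : a4 * c = 0) (h2 : a4 * d = 0)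
    (h3 : (b2 + 1 - 2 * a1) * c = 0) :
    IsDerMat (MSC a1 0 0 a4 0 b2 (1 - a1) 0) !![0, 0; c, d] := by
  show _ = _
  rcases mul_eq_zero.mp h1 with h0 | h0
  all_goals
    subst h0
    ext i jk
    obtain ⟨j, k⟩ := jk
    fin_cases i <;> fin_cases j <;> fin_cases k <;>
      simp [Matrix.mul_apply, Fintype.sum_prod_type, Fin.sum_univ_two, MSC,
        finProdFinEquiv, Matrix.one_apply, -mul_eq_zero] <;>
      first
        | ring1
        | exact (mul_eq_zero.mp h2).imp id (fun hz => by rw [hz]; ring)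
        | linear_combination 2 * h2
        | linear_combination -(2 * h2)
        | linear_combination h2
        | linear_combination -h2
        | linear_combination h3
        | linear_combination -h3

lemma der_char (htwo : (2 : F) ≠ 0) (a1 a4 b2 : F) (D : Matrix (Fin 2) (Fin 2) F) :
    IsDerMat (MSC a1 0 0 a4 0 b2 (1 - a1) 0) D ↔
      D 0 0 = 0 ∧ D 0 1 = 0 ∧ a4 * D 1 0 = 0 ∧ a4 * D 1 1 = 0 ∧
        (b2 + 1 - 2 * a1) * D 1 0 = 0 := by
  constructor
  · intro h
    have h' := h
    rw [IsDerMat] at h'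
    have F1 := congrFun (congrFun h' 0) ((0 : Fin 2), (0 : Fin 2))
    have F2 := congrFun (congrFun h' 0) ((0 : Fin 2), (1 : Fin 2))
    have F4 := congrFun (congrFun h' 0) ((1 : Fin 2), (1 : Fin 2))
    have F5 := congrFun (congrFun h' 1) ((0 : Fin 2), (0 : Fin 2))
    have F7 := congrFun (congrFun h' 1) ((1 : Fin 2), (0 : Fin 2))
    have F8 := congrFun (congrFun h' 1) ((1 : Fin 2), (1 : Fin 2))
    simp only [Matrix.mul_apply, Fintype.sum_prod_type, Fin.sum_univ_two, MSC,
      Matrix.kroneckerMap_apply, Matrix.of_apply, Matrix.add_apply,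
      Matrix.one_apply] at F1 F2 F4 F5 F7 F8
    norm_num [finProdFinEquiv] at F1 F2 F4 F5 F7 F8
    have ha : D 0 0 = 0 := by linear_combination -F1 - F7
    have hb : D 0 1 = 0 := by linear_combination -F2 - F8
    have h1 : a4 * D 1 0 = 0 := by linear_combination -F2 + (b2 - a1) * hb
    have h2' : (2 : F) * (a4 * D 1 1) = 0 := by linear_combination -F4 + a4 * ha
    refine ⟨ha, hb, h1, (mul_eq_zero.mp h2').resolve_left htwo, ?_⟩
    linear_combination -F5
  · rintro ⟨ha, hb, h1, h2, h3⟩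
    have := der_of a1 a4 b2 (D 1 0) (D 1 1) h1 h2 h3
    rwa [Matrix.eta_fin_two D, ha, hb]

lemma zmat {F : Type*} [Field F] : (!![(0 : F), 0; 0, 0]) = 0 := by
  ext i j
  fin_cases i <;> fin_cases j <;> rfl

end Aux

theorem stmt_4 {F : Type*} [Field F] (h2 : ringChar F ≠ 2) (h3 : ringChar F ≠ 3)
    (a1 a4 b2 : F)
    (A : Matrix (Fin 2) (Fin 2 × Fin 2) F)
    (hA : A = MSC a1 0 0 a4 0 b2 (1 - a1) 0) :
    (a4 ≠ 0 →
      (∀ g : Matrix (Fin 2) (Fin 2) F,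
        IsAutoMat A g ↔ g = !![1, 0; 0, 1] ∨ g = !![1, 0; 0, -1]) ∧
      (∀ D : Matrix (Fin 2) (Fin 2) F, IsDerMat A D ↔ D = 0)) ∧
    (a4 = 0 → b2 ≠ 2 * a1 - 1 →
      (∀ g : Matrix (Fin 2) (Fin 2) F,
        IsAutoMat A g ↔ ∃ d : F, d ≠ 0 ∧ g = !![1, 0; 0, d]) ∧
      (∀ D : Matrix (Fin 2) (Fin 2) F,
        IsDerMat A D ↔ ∃ d : F, D = !![0, 0; 0, d])) ∧
    (a4 = 0 → b2 = 2 * a1 - 1 →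
      (∀ g : Matrix (Fin 2) (Fin 2) F,
        IsAutoMat A g ↔ ∃ c d : F, d ≠ 0 ∧ g = !![1, 0; c, d]) ∧
      (∀ D : Matrix (Fin 2) (Fin 2) F,
        IsDerMat A D ↔ ∃ c d : F, D = !![0, 0; c, d])) := by
  have htwo : (2 : F) ≠ 0 := Ring.two_ne_zero h2
  subst hA
  refine ⟨fun ha4 => ⟨fun g => ?_, fun D => ?_⟩,
    fun ha4 hb2 => ⟨fun g => ?_, fun D => ?_⟩,
    fun ha4 hb2 => ⟨fun g => ?_, fun D => ?_⟩⟩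
  · -- case i, automorphisms
    rw [aut_char]
    constructor
    · rintro ⟨ha, hb, hd, h1, h2', h3'⟩
      have hc : g 1 0 = 0 := (mul_eq_zero.mp h1).resolve_left ha4
      have hd2 : (g 1 1 - 1) * (g 1 1 + 1) = 0 := by
        have hsq : a4 * (g 1 1 ^ 2) = a4 * 1 := by linear_combination -h2'
        have := mul_left_cancel₀ ha4 hsq
        linear_combination this
      rcases mul_eq_zero.mp hd2 with hz | hz
      · left
        rw [Matrix.eta_fin_two g, ha, hb, hc, sub_eq_zero.mp hz]
      · right
        rw [Matrix.eta_fin_two g, ha, hb, hc, eq_neg_of_add_eq_zero_left hz]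
    · rintro (rfl | rfl) <;> norm_num
  · -- case i, derivations
    rw [der_char htwo]
    constructor
    · rintro ⟨ha, hb, h1, h2', _⟩
      have hc : D 1 0 = 0 := (mul_eq_zero.mp h1).resolve_left ha4
      have hd : D 1 1 = 0 := (mul_eq_zero.mp h2').resolve_left ha4
      rw [Matrix.eta_fin_two D, ha, hb, hc, hd, zmat]
    · rintro rfl
      norm_num
  · -- case ii, automorphisms
    subst ha4
    rw [aut_char]
    constructor
    · rintro ⟨ha, hb, hd, -, -, h3'⟩
      have hne : 2 * a1 - 1 - b2 ≠ 0 := fun h => hb2 (by linear_combination -h)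
      have hc : g 1 0 = 0 := (mul_eq_zero.mp h3').resolve_left hne
      exact ⟨g 1 1, hd, by ext i j; fin_cases i <;> fin_cases j <;> simp [ha, hb, hc]⟩
    · rintro ⟨d, hd, rfl⟩
      norm_num [hd]
  · -- case ii, derivations
    subst ha4
    rw [der_char htwo]
    constructor
    · rintro ⟨ha, hb, -, -, h3'⟩
      have hne : b2 + 1 - 2 * a1 ≠ 0 := fun h => hb2 (by linear_combination h)
      have hc : D 1 0 = 0 := (mul_eq_zero.mp h3').resolve_left hne
      exact ⟨D 1 1, by ext i j; fin_cases i <;> fin_cases j <;> simp [ha, hb, hc]⟩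
    · rintro ⟨d, rfl⟩
      norm_num
  · -- case iii, automorphisms
    subst ha4
    subst hb2
    rw [aut_char]
    constructor
    · rintro ⟨ha, hb, hd, -, -, -⟩
      exact ⟨g 1 0, g 1 1, hd, by ext i j; fin_cases i <;> fin_cases j <;> simp [ha, hb]⟩
    · rintro ⟨c, d, hd, rfl⟩
      refine ⟨by norm_num, by norm_num, by simpa using hd, by norm_num, by norm_num, ?_⟩
      norm_num
  · -- case iii, derivations
    subst ha4
    subst hb2
    rw [der_char htwo]
    constructor
    · rintro ⟨ha, hb, -, -, -⟩
      exact ⟨D 1 0, D 1 1, by ext i j; fin_cases i <;> fin_cases j <;> simp [ha, hb]⟩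
    · rintro ⟨c, d, rfl⟩
      refine ⟨by norm_num, by norm_num, by norm_num, by norm_num, ?_⟩
      norm_num
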